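/- Let f be a monic real-rooted polynomial of degree n and g a monic real-rooted polynomial of degree n−1 that interlaces f. Then for any two monic real-rooted degree n polynomials f_1, f_2 both interlaced by g, every convex combination λf_1 + (1−λ)f_2 (0 ≤ λ ≤ 1) is real-rooted, and its largest root lies between the minimum and maximum of the largest roots of f_1 and f_2. -/

import Mathlib

open scoped Classical
open Polynomial

/-- A real polynomial is real-rooted if it has a full set of real roots
(counted with multiplicity). -/
def RealRooted (f : Polynomial ℝ) : Prop := Multiset.card f.roots = f.natDegree

/-- The roots of a real polynomial, sorted in increasing order. -/
noncomputable def sortedRoots (f : Polynomial ℝ) : List ℝ := f.roots.sort (· ≤ ·)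

/-- `g` interlaces `f`: both are real-rooted, `deg g = deg f - 1`, and the sorted
roots satisfy `β₁ ≤ α₁ ≤ β₂ ≤ ⋯ ≤ α_{n-1} ≤ β_n`. -/
def Interlaces (g f : Polynomial ℝ) : Prop :=
  RealRooted f ∧ RealRooted g ∧ g.natDegree + 1 = f.natDegree ∧
  ∀ k, k < g.natDegree →
    (sortedRoots f).getD k 0 ≤ (sortedRoots g).getD k 0 ∧
    (sortedRoots g).getD k 0 ≤ (sortedRoots f).getD (k + 1) 0

/-- The largest real root of a polynomial. -/
noncomputable def maxRoot (f : Polynomial ℝ) : ℝ := sSup {x : ℝ | f.IsRoot x}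


lemma list_getD_eraseIdx_lt (l : List ℝ) (i j : ℕ) (h : j < i) :
    (l.eraseIdx i).getD j 0 = l.getD j 0 := by
  induction l generalizing i j with
  | nil => simp
  | cons a t ih =>
    cases i with
    | zero => omega
    | succ i =>
      cases j with
      | zero => simp
      | succ j => simpa using ih i j (by omega)

lemma list_getD_eraseIdx_ge (l : List ℝ) (i j : ℕ) (h : i ≤ j) :
    (l.eraseIdx i).getD j 0 = l.getD (j+1) 0 := by
  induction l generalizing i j with
  | nil => simp
  | cons a t ih =>
    cases i with
    | zero => simp
    | succ i =>
      cases j with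
      | zero => omega
      | succ j => simpa using ih i j (by omega)

lemma list_getD_ne_of_lt_indexOf (l : List ℝ) (c : ℝ) (j : ℕ) (h : j < l.idxOf c) :
    l.getD j 0 ≠ c := by
  induction l generalizing j with
  | nil => simp at h
  | cons a t ih =>
    by_cases hac : a = c
    · rw [List.idxOf_cons_eq _ hac] at h; omega
    · rw [List.idxOf_cons_ne _ hac] at h
      cases j with
      | zero => simpa using hac
      | succ j => simpa using ih j (by omega)

lemma sorted_getD_mono {l : List ℝ} (hl : l.Pairwise (· ≤ ·)) {i j : ℕ}
    (hij : i ≤ j) (hj : j < l.length) : l.getD i 0 ≤ l.getD j 0 := by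
  rw [List.getD_eq_getElem l 0 (lt_of_le_of_lt hij hj), List.getD_eq_getElem l 0 hj]
  rcases eq_or_lt_of_le hij with rfl | h
  · exact le_refl _
  · exact List.pairwise_iff_getElem.mp hl i j (lt_of_le_of_lt hij hj) hj h

lemma list_prod_map_eq_range_prod (l : List ℝ) (fn : ℝ → ℝ) :
    (l.map fn).prod = ∏ j ∈ Finset.range l.length, fn (l.getD j 0) := by
  induction l with
  | nil => simp
  | cons a t ih =>
    rw [List.map_cons, List.prod_cons, List.length_cons, Finset.prod_range_succ']
    simp only [List.getD_cons_succ, List.getD_cons_zero, ih, mul_comm]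

lemma sortedRoots_sorted (f : Polynomial ℝ) : (sortedRoots f).Pairwise (· ≤ ·) :=
  Multiset.pairwise_sort _ _

lemma sortedRoots_length (f : Polynomial ℝ) (hf : RealRooted f) :
    (sortedRoots f).length = f.natDegree := by
  rw [sortedRoots, Multiset.length_sort]; exact hf

lemma mem_sortedRoots {f : Polynomial ℝ} {a : ℝ} : a ∈ sortedRoots f ↔ a ∈ f.roots :=
  Multiset.mem_sort _

lemma sortedRoots_getD_mem (f : Polynomial ℝ) (k : ℕ) (hk : k < (sortedRoots f).length) :
    (sortedRoots f).getD k 0 ∈ f.roots := by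
  rw [List.getD_eq_getElem _ 0 hk]
  exact mem_sortedRoots.mp (List.getElem_mem hk)

lemma sortedRoots_getD_isRoot (f : Polynomial ℝ) (hf : f ≠ 0) (k : ℕ)
    (hk : k < (sortedRoots f).length) : f.IsRoot ((sortedRoots f).getD k 0) :=
  isRoot_of_mem_roots (sortedRoots_getD_mem f k hk)

lemma eval_eq_prod_roots (f : Polynomial ℝ) (hf : f.Monic) (hr : RealRooted f) (x : ℝ) :
    f.eval x = (f.roots.map (fun a => x - a)).prod := by
  conv_lhs => rw [← Polynomial.C_leadingCoeff_mul_prod_multiset_X_sub_C hr]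
  rw [hf.leadingCoeff, map_one, one_mul, Polynomial.eval_multiset_prod, Multiset.map_map]
  simp


lemma eval_eq_prod_sortedRoots (f : Polynomial ℝ) (hf : f.Monic) (hr : RealRooted f) (x : ℝ) :
    f.eval x = ∏ j ∈ Finset.range f.natDegree, (x - (sortedRoots f).getD j 0) := by
  rw [eval_eq_prod_roots f hf hr x, ← sortedRoots_length f hr,
    ← list_prod_map_eq_range_prod (sortedRoots f) (fun a => x - a)]
  rw [show f.roots = ↑(sortedRoots f) from (Multiset.sort_eq _ _).symm]
  simp [Multiset.map_coe, Multiset.prod_coe]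

lemma sign_prod_aux (n m : ℕ) (hm : m ≤ n) (F : ℕ → ℝ)
    (h1 : ∀ j < m, 0 ≤ F j) (h2 : ∀ j, m ≤ j → j < n → F j ≤ 0) :
    0 ≤ (-1 : ℝ)^(n - m) * ∏ j ∈ Finset.range n, F j := by
  rw [← Finset.prod_range_mul_prod_Ico F hm]
  have h4 : ((-1 : ℝ)^(n-m)) * ((-1 : ℝ)^(n-m)) = 1 := by
    rw [← pow_add, ← two_mul, pow_mul]; norm_num
  have key : (∏ j ∈ Finset.Ico m n, (-(F j))) = (-1 : ℝ)^(n-m) * ∏ j ∈ Finset.Ico m n, F j := by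
    have : ∀ j ∈ Finset.Ico m n, -F j = (-1) * F j := fun j _ => by ring
    rw [Finset.prod_congr rfl this, Finset.prod_mul_distrib, Finset.prod_const, Nat.card_Ico]
  have hP : 0 ≤ ∏ j ∈ Finset.range m, F j :=
    Finset.prod_nonneg fun j hj => h1 j (Finset.mem_range.mp hj)
  have hQ : 0 ≤ ∏ j ∈ Finset.Ico m n, (-(F j)) :=
    Finset.prod_nonneg fun j hj => by
      have := Finset.mem_Ico.mp hj; linarith [h2 j this.1 this.2]
  have key2 : ∏ j ∈ Finset.Ico m n, F j = (-1 : ℝ)^(n-m) * ∏ j ∈ Finset.Ico m n, (-(F j)) := by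
    rw [key, ← mul_assoc, h4, one_mul]
  rw [key2]
  calc (0:ℝ) ≤ (∏ j ∈ Finset.range m, F j) * ∏ j ∈ Finset.Ico m n, (-(F j)) :=
        mul_nonneg hP hQ
    _ = (-1:ℝ)^(n-m) * ((∏ j ∈ Finset.range m, F j) * ((-1:ℝ)^(n-m) * ∏ j ∈ Finset.Ico m n, (-(F j)))) := by
        rw [show ∀ a b c : ℝ, a * (b * (a * c)) = (a*a) * (b * c) from fun a b c => by ring, h4, one_mul]

/-- Sign of a monic real-rooted polynomial at a point lying between the `m`-th smallest
and the rest of its roots. -/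
lemma sign_eval_of_pos (f : Polynomial ℝ) (hf : f.Monic) (hr : RealRooted f) (x : ℝ) (m : ℕ)
    (hm : m ≤ f.natDegree)
    (h1 : ∀ j < m, (sortedRoots f).getD j 0 ≤ x)
    (h2 : ∀ j, m ≤ j → j < f.natDegree → x ≤ (sortedRoots f).getD j 0) :
    0 ≤ (-1 : ℝ)^(f.natDegree - m) * f.eval x := by
  rw [eval_eq_prod_sortedRoots f hf hr x]
  exact sign_prod_aux _ m hm _ (fun j hj => by linarith [h1 j hj])
    (fun j hj1 hj2 => by linarith [h2 j hj1 hj2])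

lemma eval_pos_of_roots_lt (f : Polynomial ℝ) (hf : f.Monic) (hr : RealRooted f) (x : ℝ)
    (h : ∀ y ∈ f.roots, y < x) : 0 < f.eval x := by
  rw [eval_eq_prod_roots f hf hr x]
  refine Multiset.prod_pos fun a ha => ?_
  obtain ⟨y, hy, rfl⟩ := Multiset.mem_map.mp ha
  linarith [h y hy]

lemma eval_sign_of_lt_roots (f : Polynomial ℝ) (hf : f.Monic) (hr : RealRooted f) (x : ℝ)
    (h : ∀ y ∈ f.roots, x < y) : 0 < (-1 : ℝ)^(f.natDegree) * f.eval x := by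
  have h0 : 0 ≤ (-1 : ℝ)^(f.natDegree - 0) * f.eval x := by
    apply sign_eval_of_pos f hf hr x 0 (Nat.zero_le _) (by omega)
    intro j _ hj
    exact le_of_lt (h _ (sortedRoots_getD_mem f j (by rwa [sortedRoots_length f hr])))
  rcases lt_or_eq_of_le h0 with h0 | h0
  · simpa using h0
  · exfalso
    have hne : f.eval x ≠ 0 := by
      intro hx
      have : x ∈ f.roots := by
        rw [Polynomial.mem_roots hf.ne_zero]
        exact hx
      exact absurd (h x this) (lt_irrefl x)
    apply hne
    rcases mul_eq_zero.mp h0.symm with h' | h'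
    · exact absurd h' (pow_ne_zero _ (by norm_num : (-1:ℝ) ≠ 0))
    · exact h'

lemma exists_isRoot_of_realRooted (f : Polynomial ℝ) (hr : RealRooted f)
    (hd : 0 < f.natDegree) : ∃ x, f.IsRoot x := by
  have : f.roots ≠ 0 := by
    intro h0
    rw [RealRooted, h0] at hr
    simp at hr; omega
  obtain ⟨x, hx⟩ := Multiset.exists_mem_of_ne_zero this
  exact ⟨x, isRoot_of_mem_roots hx⟩

lemma isRoot_maxRoot (f : Polynomial ℝ) (hf : f ≠ 0) (h : ∃ x, f.IsRoot x) :
    f.IsRoot (maxRoot f) := by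
  have hfin : {x : ℝ | f.IsRoot x}.Finite := Polynomial.finite_setOf_isRoot hf
  exact Set.Nonempty.csSup_mem h hfin

lemma le_maxRoot (f : Polynomial ℝ) (hf : f ≠ 0) {x : ℝ} (hx : f.IsRoot x) :
    x ≤ maxRoot f :=
  le_csSup (Polynomial.finite_setOf_isRoot hf).bddAbove hx

lemma maxRoot_le (f : Polynomial ℝ) (h : ∃ x, f.IsRoot x) {b : ℝ}
    (hb : ∀ x, f.IsRoot x → x ≤ b) : maxRoot f ≤ b :=
  csSup_le h hb

/-- intermediate value theorem for polynomials, combined form -/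
lemma poly_ivt (p : Polynomial ℝ) {a b : ℝ} (hab : a ≤ b)
    (h : p.eval a * p.eval b ≤ 0) : ∃ x ∈ Set.Icc a b, p.IsRoot x := by
  have hc : ContinuousOn (fun x => p.eval x) (Set.Icc a b) := p.continuousOn
  rcases mul_nonpos_iff.mp h with ⟨h1, h2⟩ | ⟨h1, h2⟩
  · have : (0:ℝ) ∈ Set.Icc (p.eval b) (p.eval a) := ⟨h2, h1⟩
    obtain ⟨x, hx, hx0⟩ := intermediate_value_Icc' hab hc this
    exact ⟨x, hx, hx0⟩
  · have : (0:ℝ) ∈ Set.Icc (p.eval a) (p.eval b) := ⟨h1, h2⟩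
    obtain ⟨x, hx, hx0⟩ := intermediate_value_Icc hab hc this
    exact ⟨x, hx, hx0⟩

lemma interlace_erase {β γ : List ℝ} (hβ : β.Pairwise (· ≤ ·)) (hγ : γ.Pairwise (· ≤ ·))
    (hlen : γ.length + 1 = β.length)
    (hint : ∀ k < γ.length, β.getD k 0 ≤ γ.getD k 0 ∧ γ.getD k 0 ≤ β.getD (k+1) 0)
    {c : ℝ} (hcβ : c ∈ β) (hcγ : c ∈ γ) :
    ∀ k < γ.length - 1, (β.erase c).getD k 0 ≤ (γ.erase c).getD k 0 ∧
      (γ.erase c).getD k 0 ≤ (β.erase c).getD (k+1) 0 := by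
  set m := γ.length with hm
  set p := β.idxOf c with hp
  set q := γ.idxOf c with hq
  have hpl : p < β.length := List.idxOf_lt_length_iff.mpr hcβ
  have hql : q < m := List.idxOf_lt_length_iff.mpr hcγ
  have hβp : β.getD p 0 = c := by
    rw [List.getD_eq_getElem _ 0 hpl]; exact List.getElem_idxOf hpl
  have hγq : γ.getD q 0 = c := by
    rw [List.getD_eq_getElem _ 0 hql]; exact List.getElem_idxOf hql
  have heβ : β.erase c = β.eraseIdx p := List.erase_eq_eraseIdx_of_idxOf hp.symm
  have heγ : γ.erase c = γ.eraseIdx q := List.erase_eq_eraseIdx_of_idxOf hq.symm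
  -- p ≤ q + 1
  have hpq : p ≤ q + 1 := by
    by_contra hcon
    push_neg at hcon
    have h1 : β.getD (q+1) 0 ≤ c := by
      rw [← hβp]; exact sorted_getD_mono hβ (by omega) hpl
    have h2 : c ≤ β.getD (q+1) 0 := by
      rw [← hγq]; exact (hint q hql).2
    exact list_getD_ne_of_lt_indexOf β c (q+1) (by omega) (le_antisymm h1 h2)
  -- no index k with p ≤ k < q
  have hnk : ∀ k, p ≤ k → k < q → False := by
    intro k hk1 hk2
    have h1 : c ≤ γ.getD p 0 := by rw [← hβp]; exact (hint p (by omega)).1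
    have h2 : γ.getD p 0 ≤ γ.getD k 0 := sorted_getD_mono hγ hk1 (by omega)
    have h3 : γ.getD k 0 ≤ c := by rw [← hγq]; exact sorted_getD_mono hγ (by omega) hql
    exact list_getD_ne_of_lt_indexOf γ c k (by omega) (le_antisymm h3 (le_trans h1 h2))
  intro k hk
  rw [heβ, heγ]
  constructor
  · -- β'_k ≤ γ'_k
    rcases lt_or_ge k p with hkp | hkp <;> rcases lt_or_ge k q with hkq | hkq
    · rw [list_getD_eraseIdx_lt _ _ _ hkp, list_getD_eraseIdx_lt _ _ _ hkq]
      exact (hint k (by omega)).1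
    · rw [list_getD_eraseIdx_lt _ _ _ hkp, list_getD_eraseIdx_ge _ _ _ hkq]
      calc β.getD k 0 ≤ γ.getD k 0 := (hint k (by omega)).1
        _ ≤ γ.getD (k+1) 0 := sorted_getD_mono hγ (by omega) (by omega)
    · exact absurd (hnk k hkp hkq) (fun h => h)
    · rw [list_getD_eraseIdx_ge _ _ _ hkp, list_getD_eraseIdx_ge _ _ _ hkq]
      exact (hint (k+1) (by omega)).1
  · -- γ'_k ≤ β'_{k+1}
    rcases lt_or_ge (k+1) p with hkp | hkp <;> rcases lt_or_ge k q with hkq | hkq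
    · rw [list_getD_eraseIdx_lt _ _ _ hkp, list_getD_eraseIdx_lt _ _ _ hkq]
      exact (hint k (by omega)).2
    · omega
    · rw [list_getD_eraseIdx_ge _ _ _ hkp, list_getD_eraseIdx_lt _ _ _ hkq]
      calc γ.getD k 0 ≤ β.getD (k+1) 0 := (hint k (by omega)).2
        _ ≤ β.getD (k+2) 0 := sorted_getD_mono hβ (by omega) (by omega)
    · rw [list_getD_eraseIdx_ge _ _ _ hkp, list_getD_eraseIdx_ge _ _ _ hkq]
      exact (hint (k+1) (by omega)).2

lemma sorted_erase {l : List ℝ} (hl : l.Pairwise (· ≤ ·)) (c : ℝ) :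
    (l.erase c).Pairwise (· ≤ ·) :=
  List.Pairwise.sublist (List.erase_sublist (a := c) (l := l)) hl

lemma exists_quotient (f : Polynomial ℝ) (hf : f.Monic) (hr : RealRooted f) {c : ℝ}
    (hc : f.IsRoot c) :
    ∃ q : Polynomial ℝ, f = (X - C c) * q ∧ q.Monic ∧ q.natDegree + 1 = f.natDegree ∧
      RealRooted q ∧ f.roots = c ::ₘ q.roots ∧ sortedRoots q = (sortedRoots f).erase c := by
  obtain ⟨q, hq⟩ := (Polynomial.dvd_iff_isRoot.mpr hc)
  have hXC : (X - C c).Monic := Polynomial.monic_X_sub_C c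
  have hqm : q.Monic := hXC.of_mul_monic_left (hq ▸ hf)
  have hq0 : q ≠ 0 := hqm.ne_zero
  have hdeg : q.natDegree + 1 = f.natDegree := by
    rw [hq, Polynomial.natDegree_mul (hXC.ne_zero) hq0, Polynomial.natDegree_X_sub_C]
    omega
  have hroots : f.roots = c ::ₘ q.roots := by
    rw [hq, Polynomial.roots_mul (by rw [← hq]; exact hf.ne_zero), Polynomial.roots_X_sub_C]
    rfl
  have hrr : RealRooted q := by
    have := hr
    rw [RealRooted, hroots] at this
    rw [RealRooted]
    simp only [Multiset.card_cons] at this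
    omega
  refine ⟨q, hq, hqm, hdeg, hrr, hroots, ?_⟩
  apply List.Perm.eq_of_pairwise' (sortedRoots_sorted q) (sorted_erase (sortedRoots_sorted f) c)
  rw [← Multiset.coe_eq_coe, ← Multiset.coe_erase]
  rw [sortedRoots, sortedRoots, Multiset.sort_eq, Multiset.sort_eq, hroots,
    Multiset.erase_cons_head]

lemma combo_monic {f₁ f₂ : Polynomial ℝ} {n : ℕ} (h1 : f₁.Monic) (h2 : f₂.Monic)
    (hd1 : f₁.natDegree = n) (hd2 : f₂.natDegree = n) (l : ℝ) :
    (l • f₁ + (1 - l) • f₂).Monic ∧ (l • f₁ + (1 - l) • f₂).natDegree = n := by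
  set h := l • f₁ + (1 - l) • f₂ with hh
  have hcoeff : h.coeff n = 1 := by
    rw [hh]
    simp only [Polynomial.coeff_add, Polynomial.coeff_smul, smul_eq_mul]
    rw [← hd1, Polynomial.Monic.coeff_natDegree h1, hd1, ← hd2,
      Polynomial.Monic.coeff_natDegree h2]
    ring
  have hdegle : h.natDegree ≤ n := by
    apply le_trans (Polynomial.natDegree_add_le _ _)
    apply max_le
    · exact le_trans (Polynomial.natDegree_smul_le _ _) (le_of_eq hd1)
    · exact le_trans (Polynomial.natDegree_smul_le _ _) (le_of_eq hd2)
  have hdegge : n ≤ h.natDegree := Polynomial.le_natDegree_of_ne_zero (by rw [hcoeff]; norm_num)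
  have hdeg : h.natDegree = n := le_antisymm hdegle hdegge
  refine ⟨?_, hdeg⟩
  rw [Polynomial.Monic, Polynomial.leadingCoeff, hdeg, hcoeff]

lemma interlaces_quotient {g f g' q : Polynomial ℝ} (hi : Interlaces g f) {c : ℝ}
    (hfq : sortedRoots q = (sortedRoots f).erase c)
    (hgq : sortedRoots g' = (sortedRoots g).erase c)
    (hrq : RealRooted q) (hrg' : RealRooted g')
    (hdq : q.natDegree + 1 = f.natDegree) (hdg' : g'.natDegree + 1 = g.natDegree)
    (hcf : c ∈ f.roots) (hcg : c ∈ g.roots) : Interlaces g' q := by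
  obtain ⟨hrf, hrg, hdeg, hint⟩ := hi
  refine ⟨hrq, hrg', by omega, ?_⟩
  intro k hk
  have hcβ : c ∈ sortedRoots f := mem_sortedRoots.mpr hcf
  have hcγ : c ∈ sortedRoots g := mem_sortedRoots.mpr hcg
  have key := interlace_erase (sortedRoots_sorted f) (sortedRoots_sorted g)
    (by rw [sortedRoots_length f hrf, sortedRoots_length g hrg]; omega)
    (fun k hk => hint k (by rwa [sortedRoots_length g hrg] at hk)) hcβ hcγ
    k (by rw [sortedRoots_length g hrg]; omega)
  rw [hfq, hgq]
  exact key

lemma sign_at_interlacer {g f : Polynomial ℝ} (hf : f.Monic) (hi : Interlaces g f)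
    {n : ℕ} (hn : f.natDegree = n) {k : ℕ} (hk : k < g.natDegree) :
    0 ≤ (-1:ℝ)^(n - (k+1)) * f.eval ((sortedRoots g).getD k 0) := by
  obtain ⟨hrf, hrg, hdeg, hint⟩ := hi
  have hγlen : (sortedRoots g).length = g.natDegree := sortedRoots_length g hrg
  rw [← hn]
  apply sign_eval_of_pos f hf hrf _ (k+1) (by omega)
  · intro j hj
    calc (sortedRoots f).getD j 0 ≤ (sortedRoots g).getD j 0 := (hint j (by omega)).1
      _ ≤ (sortedRoots g).getD k 0 :=
        sorted_getD_mono (sortedRoots_sorted g) (by omega) (by omega)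
  · intro j hj1 hj2
    obtain ⟨i, rfl⟩ : ∃ i, j = i + 1 := ⟨j - 1, by omega⟩
    calc (sortedRoots g).getD k 0 ≤ (sortedRoots g).getD i 0 :=
        sorted_getD_mono (sortedRoots_sorted g) (by omega) (by omega)
      _ ≤ (sortedRoots f).getD (i+1) 0 := (hint i (by omega)).2

lemma eval_combo (f₁ f₂ : Polynomial ℝ) (l x : ℝ) :
    (l • f₁ + (1 - l) • f₂).eval x = l * f₁.eval x + (1 - l) * f₂.eval x := by
  simp [Polynomial.eval_add, Polynomial.eval_smul, smul_eq_mul]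

/-- If the convex combination vanishes at a point where both polynomials have the
same weak sign, both must vanish (for strictly interior `l`). -/
lemma both_eval_zero {e u v l : ℝ} (he : e ≠ 0) (h1 : 0 ≤ e * u) (h2 : 0 ≤ e * v)
    (hl0 : 0 < l) (hl1 : l < 1) (hev : l * u + (1 - l) * v = 0) : u = 0 ∧ v = 0 := by
  have k1 : 0 ≤ l * (e * u) := mul_nonneg hl0.le h1
  have k2 : 0 ≤ (1 - l) * (e * v) := mul_nonneg (by linarith) h2
  have ksum : l * (e * u) + (1 - l) * (e * v) = 0 := by
    have : e * (l * u + (1 - l) * v) = 0 := by rw [hev]; ring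
    nlinarith [this]
  have k3 : l * (e * u) = 0 := by linarith
  have k4 : (1 - l) * (e * v) = 0 := by linarith
  constructor
  · rcases mul_eq_zero.mp k3 with h | h
    · linarith
    · rcases mul_eq_zero.mp h with h' | h'
      · exact absurd h' he
      · exact h'
  · rcases mul_eq_zero.mp k4 with h | h
    · linarith
    · rcases mul_eq_zero.mp h with h' | h'
      · exact absurd h' he
      · exact h'

lemma mul_nonpos_of_opp {u x y : ℝ} (hu : u * u = 1) (h1 : 0 < u * x) (h2 : 0 < -u * y) :
    x * y ≤ 0 := by nlinarith [mul_pos h1 h2]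

lemma neg_one_pow_succ (m : ℕ) : (-1:ℝ)^(m+1) = -((-1:ℝ)^m) := by rw [pow_succ]; ring

lemma neg_one_pow_sq (m : ℕ) : (-1:ℝ)^m * (-1:ℝ)^m = 1 := by
  rw [← pow_add, ← two_mul, pow_mul]; norm_num

lemma combo_realRooted : ∀ (n : ℕ) (g f₁ f₂ : Polynomial ℝ) (l : ℝ), g.Monic → f₁.Monic →
    f₂.Monic → f₁.natDegree = n → f₂.natDegree = n → Interlaces g f₁ → Interlaces g f₂ →
    0 ≤ l → l ≤ 1 → RealRooted (l • f₁ + (1 - l) • f₂) := by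
  intro n
  induction n using Nat.strong_induction_on with
  | _ n ih =>
  intro g f₁ f₂ l hg h1 h2 hd1 hd2 hi1 hi2 hl0 hl1
  rcases eq_or_lt_of_le hl0 with rfl | hl0'
  · simpa using hi2.1
  rcases eq_or_lt_of_le hl1 with rfl | hl1'
  · simpa using hi1.1
  obtain ⟨hm, hdeg⟩ := combo_monic h1 h2 hd1 hd2 l
  set h := l • f₁ + (1 - l) • f₂ with hh
  have hn : g.natDegree + 1 = n := by rw [← hd1]; exact hi1.2.2.1
  have hγlen : (sortedRoots g).length = g.natDegree := sortedRoots_length g hi1.2.1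
  by_cases hcase : ∃ k, k < g.natDegree ∧ h.eval ((sortedRoots g).getD k 0) = 0
  · -- Case B : divide out a common root
    obtain ⟨k, hk, hev⟩ := hcase
    set c := (sortedRoots g).getD k 0 with hc
    have hcg : c ∈ g.roots := sortedRoots_getD_mem g k (by omega)
    have s1 := sign_at_interlacer h1 hi1 hd1 hk
    have s2 := sign_at_interlacer h2 hi2 hd2 hk
    rw [eval_combo] at hev
    obtain ⟨hz1, hz2⟩ := both_eval_zero (pow_ne_zero _ (by norm_num : (-1:ℝ) ≠ 0))
      s1 s2 hl0' hl1' hev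
    obtain ⟨q₁, hfq1, hq1m, hq1d, hq1r, hroots1, hsr1⟩ := exists_quotient f₁ h1 hi1.1 hz1
    obtain ⟨q₂, hfq2, hq2m, hq2d, hq2r, hroots2, hsr2⟩ := exists_quotient f₂ h2 hi2.1 hz2
    obtain ⟨g', hgq, hg'm, hg'd, hg'r, hrootsg, hsrg⟩ :=
      exists_quotient g hg hi1.2.1 (isRoot_of_mem_roots hcg)
    have hint1 : Interlaces g' q₁ := interlaces_quotient hi1 hsr1 hsrg hq1r hg'r hq1d hg'd
      (Polynomial.mem_roots h1.ne_zero |>.mpr hz1) hcg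
    have hint2 : Interlaces g' q₂ := interlaces_quotient hi2 hsr2 hsrg hq2r hg'r hq2d hg'd
      (Polynomial.mem_roots h2.ne_zero |>.mpr hz2) hcg
    have hrec : RealRooted (l • q₁ + (1 - l) • q₂) :=
      ih (n-1) (by omega) g' q₁ q₂ l hg'm hq1m hq2m (by omega) (by omega) hint1 hint2 hl0 hl1
    obtain ⟨hm', hdeg'⟩ := combo_monic hq1m hq2m (show q₁.natDegree = n-1 by omega)
      (show q₂.natDegree = n-1 by omega) l
    have hfact : h = (X - C c) * (l • q₁ + (1 - l) • q₂) := by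
      rw [hh, hfq1, hfq2, Polynomial.smul_eq_C_mul, Polynomial.smul_eq_C_mul,
        Polynomial.smul_eq_C_mul, Polynomial.smul_eq_C_mul]
      ring
    rw [RealRooted, hfact, Polynomial.roots_mul
      (mul_ne_zero (Polynomial.X_sub_C_ne_zero c) hm'.ne_zero), Polynomial.roots_X_sub_C]
    rw [← hfact, hdeg]
    have := hrec
    rw [RealRooted, hdeg'] at this
    simp only [Multiset.card_add, Multiset.card_singleton]
    omega
  · -- Case A : n distinct roots via IVT
    push_neg at hcase
    have hn1 : 1 ≤ n := by omega
    have hflen1 : (sortedRoots f₁).length = n := by rw [sortedRoots_length f₁ hi1.1, hd1]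
    have F2 : ∀ k, k < g.natDegree →
        0 < (-1:ℝ)^(n-(k+1)) * h.eval ((sortedRoots g).getD k 0) := by
      intro k hk
      have s1 := sign_at_interlacer h1 hi1 hd1 hk
      have s2 := sign_at_interlacer h2 hi2 hd2 hk
      have hev := eval_combo f₁ f₂ l ((sortedRoots g).getD k 0)
      have hne := hcase k hk
      have hge : 0 ≤ (-1:ℝ)^(n-(k+1)) * h.eval ((sortedRoots g).getD k 0) := by
        rw [hev]; nlinarith [s1, s2]
      rcases lt_or_eq_of_le hge with hlt | heq
      · exact hlt
      · exfalso
        rcases mul_eq_zero.mp heq.symm with h' | h'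
        · exact pow_ne_zero _ (by norm_num : (-1:ℝ) ≠ 0) h'
        · exact hne h'
    obtain ⟨b1, hb1⟩ := (Polynomial.finite_setOf_isRoot h1.ne_zero).bddAbove
    obtain ⟨b2, hb2⟩ := (Polynomial.finite_setOf_isRoot h2.ne_zero).bddAbove
    obtain ⟨a1, ha1⟩ := (Polynomial.finite_setOf_isRoot h1.ne_zero).bddBelow
    obtain ⟨a2, ha2⟩ := (Polynomial.finite_setOf_isRoot h2.ne_zero).bddBelow
    set b := max b1 b2 + 1 with hbdef
    set a := min a1 a2 - 1 with hadef
    have hroots1b : ∀ y ∈ f₁.roots, y < b := fun y hy => by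
      have h' := hb1 (isRoot_of_mem_roots hy)
      have : y ≤ max b1 b2 := le_trans h' (le_max_left _ _)
      simp only [hbdef]; linarith
    have hroots2b : ∀ y ∈ f₂.roots, y < b := fun y hy => by
      have h' := hb2 (isRoot_of_mem_roots hy)
      have : y ≤ max b1 b2 := le_trans h' (le_max_right _ _)
      simp only [hbdef]; linarith
    have hroots1a : ∀ y ∈ f₁.roots, a < y := fun y hy => by
      have h' := ha1 (isRoot_of_mem_roots hy)
      have : min a1 a2 ≤ y := le_trans (min_le_left _ _) h'
      simp only [hadef]; linarith
    have hroots2a : ∀ y ∈ f₂.roots, a < y := fun y hy => by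
      have h' := ha2 (isRoot_of_mem_roots hy)
      have : min a1 a2 ≤ y := le_trans (min_le_right _ _) h'
      simp only [hadef]; linarith
    have hbh : 0 < h.eval b := by
      have p1 := eval_pos_of_roots_lt f₁ h1 hi1.1 b hroots1b
      have p2 := eval_pos_of_roots_lt f₂ h2 hi2.1 b hroots2b
      rw [eval_combo]; nlinarith
    have hah : 0 < (-1:ℝ)^n * h.eval a := by
      have p1 := eval_sign_of_lt_roots f₁ h1 hi1.1 a hroots1a
      have p2 := eval_sign_of_lt_roots f₂ h2 hi2.1 a hroots2a
      rw [hd1] at p1; rw [hd2] at p2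
      rw [eval_combo]; nlinarith
    have hrootf1_mem : ∀ j, j < n → (sortedRoots f₁).getD j 0 ∈ f₁.roots := fun j hj =>
      sortedRoots_getD_mem f₁ j (by omega)
    have hclaim : ∀ k, k < n → ∃ x, h.IsRoot x ∧
        (1 ≤ k → (sortedRoots g).getD (k-1) 0 < x) ∧
        (k+2 ≤ n → x < (sortedRoots g).getD k 0) := by
      intro k hk
      rcases Nat.eq_or_lt_of_le hn1 with hneq1 | hn2
      · -- n = 1 : conditions vacuous, just need a root
        have hha : h.eval a < 0 := by
          have h' := hah; rw [← hneq1, pow_one] at h'; linarith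
        have hab : a ≤ b := by
          obtain ⟨rt, hrt⟩ := exists_isRoot_of_realRooted f₁ hi1.1 (by omega)
          have h1a := hroots1a rt (Polynomial.mem_roots h1.ne_zero |>.mpr hrt)
          have h1b := hroots1b rt (Polynomial.mem_roots h1.ne_zero |>.mpr hrt)
          linarith
        obtain ⟨x, _, hx⟩ := poly_ivt h hab (by nlinarith)
        exact ⟨x, hx, fun hc => by omega, fun hc => by omega⟩
      · rcases Nat.eq_zero_or_pos k with hk0 | hk1
        · -- k = 0 : a root below γ₀
          subst hk0
          have hγ0 := F2 0 (by omega)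
          rw [show n - (0+1) = n - 1 by omega] at hγ0
          have haγ : a ≤ (sortedRoots g).getD 0 0 := by
            have hβ0 : (sortedRoots f₁).getD 0 0 ≤ (sortedRoots g).getD 0 0 :=
              (hi1.2.2.2 0 (by omega)).1
            have h' := hroots1a _ (hrootf1_mem 0 (by omega))
            linarith
          have hprod : h.eval a * h.eval ((sortedRoots g).getD 0 0) ≤ 0 := by
            rw [mul_comm]
            apply mul_nonpos_of_opp (neg_one_pow_sq (n-1)) hγ0
            rw [show -(-1:ℝ)^(n-1) = -((-1:ℝ)^(n-1)) by ring, ← neg_one_pow_succ (n-1),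
              show n - 1 + 1 = n by omega]
            exact hah
          obtain ⟨x, hxm, hx⟩ := poly_ivt h haγ hprod
          have hxlt : x < (sortedRoots g).getD 0 0 :=
            lt_of_le_of_ne hxm.2 (fun he => hcase 0 (by omega) (he ▸ hx))
          exact ⟨x, hx, fun hc => by omega, fun _ => hxlt⟩
        · rcases lt_or_ge (k+1) n with hklt | hkge
          · -- middle : root in (γ_{k-1}, γ_k)
            have e1 := F2 (k-1) (by omega)
            rw [show k - 1 + 1 = k by omega] at e1
            have e2 := F2 k (by omega)
            rw [show n - k = n - (k+1) + 1 by omega, neg_one_pow_succ] at e1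
            have hab : (sortedRoots g).getD (k-1) 0 ≤ (sortedRoots g).getD k 0 :=
              sorted_getD_mono (sortedRoots_sorted g) (by omega) (by rw [hγlen]; omega)
            have hprod : h.eval ((sortedRoots g).getD (k-1) 0) *
                h.eval ((sortedRoots g).getD k 0) ≤ 0 := by
              rw [mul_comm]
              exact mul_nonpos_of_opp (neg_one_pow_sq (n-(k+1))) e2 (by
                rw [show -(-1:ℝ)^(n-(k+1)) = -((-1:ℝ)^(n-(k+1))) by ring]; exact e1)
            obtain ⟨x, hxm, hx⟩ := poly_ivt h hab hprod
            have hx1 : (sortedRoots g).getD (k-1) 0 < x :=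
              lt_of_le_of_ne hxm.1 (fun he => hcase (k-1) (by omega) (he ▸ hx))
            have hx2 : x < (sortedRoots g).getD k 0 :=
              lt_of_le_of_ne hxm.2 (fun he => hcase k (by omega) (he ▸ hx))
            exact ⟨x, hx, fun _ => hx1, fun _ => hx2⟩
          · -- top : root above γ_{n-2}
            have hkeq : k = n - 1 := by omega
            have e1 := F2 (n-2) (by omega)
            rw [show n - (n-2+1) = 1 by omega, pow_one] at e1
            have hab : (sortedRoots g).getD (n-2) 0 ≤ b := by
              have h' := (hi1.2.2.2 (n-2) (by omega)).2
              rw [show n - 2 + 1 = n - 1 by omega] at h'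
              have h'' := hroots1b _ (hrootf1_mem (n-1) (by omega))
              linarith
            have hprod : h.eval ((sortedRoots g).getD (n-2) 0) * h.eval b ≤ 0 := by
              nlinarith
            obtain ⟨x, hxm, hx⟩ := poly_ivt h hab hprod
            have hx1 : (sortedRoots g).getD (n-2) 0 < x :=
              lt_of_le_of_ne hxm.1 (fun he => hcase (n-2) (by omega) (he ▸ hx))
            refine ⟨x, hx, fun _ => ?_, fun hc => by omega⟩
            rw [show k - 1 = n - 2 by omega]
            exact hx1
    -- choose the roots and count them
    set r : ℕ → ℝ := fun k => if hk : k < n then (hclaim k hk).choose else 0 with hrdef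
    have hroot : ∀ k, k < n → h.IsRoot (r k) := by
      intro k hk
      simp only [hrdef, dif_pos hk]
      exact (hclaim k hk).choose_spec.1
    have hlow : ∀ k, 1 ≤ k → k < n → (sortedRoots g).getD (k-1) 0 < r k := by
      intro k hk1 hk
      simp only [hrdef, dif_pos hk]
      exact (hclaim k hk).choose_spec.2.1 hk1
    have hupp : ∀ k, k + 2 ≤ n → r k < (sortedRoots g).getD k 0 := by
      intro k hk2
      have hk : k < n := by omega
      simp only [hrdef, dif_pos hk]
      exact (hclaim k hk).choose_spec.2.2 hk2
    have hmono : ∀ k1 k2, k1 < k2 → k2 < n → r k1 < r k2 := by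
      intro k1 k2 h12 h2n
      have u1 : r k1 < (sortedRoots g).getD k1 0 := hupp k1 (by omega)
      have u2 : (sortedRoots g).getD (k2-1) 0 < r k2 := hlow k2 (by omega) h2n
      have u3 : (sortedRoots g).getD k1 0 ≤ (sortedRoots g).getD (k2-1) 0 :=
        sorted_getD_mono (sortedRoots_sorted g) (by omega) (by rw [hγlen]; omega)
      linarith
    have hcard : (Finset.image (fun k => r k) (Finset.range n)).card = n := by
      rw [Finset.card_image_of_injOn, Finset.card_range]
      intro k1 hk1 k2 hk2 heq
      simp only [Finset.coe_range, Set.mem_Iio] at hk1 hk2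
      by_contra hne
      rcases lt_or_gt_of_ne hne with hlt | hgt
      · exact absurd heq (ne_of_lt (hmono k1 k2 hlt hk2))
      · exact absurd heq.symm (ne_of_lt (hmono k2 k1 hgt hk1))
    have hsub : Finset.image (fun k => r k) (Finset.range n) ⊆ h.roots.toFinset := by
      intro x hx
      obtain ⟨k, hk, rfl⟩ := Finset.mem_image.mp hx
      rw [Multiset.mem_toFinset, Polynomial.mem_roots hm.ne_zero]
      exact hroot k (Finset.mem_range.mp hk)
    have hge : n ≤ Multiset.card h.roots := by
      calc n = (Finset.image (fun k => r k) (Finset.range n)).card := hcard.symm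
        _ ≤ h.roots.toFinset.card := Finset.card_le_card hsub
        _ ≤ Multiset.card h.roots := Multiset.toFinset_card_le _
    have hle := Polynomial.card_roots' h
    rw [RealRooted, hdeg]
    omega

lemma isRoot_le_getD_last (f : Polynomial ℝ) (hr : RealRooted f) {x : ℝ} (hx : x ∈ f.roots) :
    x ≤ (sortedRoots f).getD (f.natDegree - 1) 0 := by
  have hmem : x ∈ sortedRoots f := mem_sortedRoots.mpr hx
  obtain ⟨i, hi, hxe⟩ := List.mem_iff_getElem.mp hmem
  have hlen := sortedRoots_length f hr
  rw [← hxe, ← List.getD_eq_getElem (sortedRoots f) 0 hi]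
  exact sorted_getD_mono (sortedRoots_sorted f) (by omega) (by omega)

lemma maxRoot_lower_aux (n : ℕ) (g f₁ f₂ : Polynomial ℝ) (hg : g.Monic) (h1 : f₁.Monic)
    (h2 : f₂.Monic) (hd1 : f₁.natDegree = n) (hd2 : f₂.natDegree = n)
    (hi1 : Interlaces g f₁) (hi2 : Interlaces g f₂) (l : ℝ) (hl0 : 0 ≤ l) (hl1 : l ≤ 1)
    (hAB : maxRoot f₁ ≤ maxRoot f₂) :
    maxRoot f₁ ≤ maxRoot (l • f₁ + (1 - l) • f₂) := by
  obtain ⟨hm, hdeg⟩ := combo_monic h1 h2 hd1 hd2 l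
  set h := l • f₁ + (1 - l) • f₂ with hh
  have hn : g.natDegree + 1 = n := by rw [← hd1]; exact hi1.2.2.1
  have hn1 : 1 ≤ n := by omega
  have hγlen : (sortedRoots g).length = g.natDegree := sortedRoots_length g hi1.2.1
  have hflen1 : (sortedRoots f₁).length = n := by rw [sortedRoots_length f₁ hi1.1, hd1]
  have hflen2 : (sortedRoots f₂).length = n := by rw [sortedRoots_length f₂ hi2.1, hd2]
  have hex1 : ∃ x, f₁.IsRoot x := exists_isRoot_of_realRooted f₁ hi1.1 (by omega)
  have hex2 : ∃ x, f₂.IsRoot x := exists_isRoot_of_realRooted f₂ hi2.1 (by omega)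
  set A := maxRoot f₁ with hA
  set B := maxRoot f₂ with hB
  -- b strictly above all roots of f₁ and f₂
  set b := max A B + 1 with hbdef
  have hroots1b : ∀ y ∈ f₁.roots, y < b := fun y hy => by
    have h' := le_maxRoot f₁ h1.ne_zero (isRoot_of_mem_roots hy)
    have : y ≤ max A B := le_trans h' (le_max_left _ _)
    simp only [hbdef]; linarith
  have hroots2b : ∀ y ∈ f₂.roots, y < b := fun y hy => by
    have h' := le_maxRoot f₂ h2.ne_zero (isRoot_of_mem_roots hy)
    have : y ≤ max A B := le_trans h' (le_max_right _ _)
    simp only [hbdef]; linarith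
  have hbh : 0 < h.eval b := by
    have p1 := eval_pos_of_roots_lt f₁ h1 hi1.1 b hroots1b
    have p2 := eval_pos_of_roots_lt f₂ h2 hi2.1 b hroots2b
    rw [eval_combo]
    rcases le_total (f₁.eval b) (f₂.eval b) with hc | hc
    · nlinarith [mul_nonneg (by linarith : (0:ℝ) ≤ 1 - l) (by linarith : (0:ℝ) ≤ f₂.eval b - f₁.eval b)]
    · nlinarith [mul_nonneg hl0 (by linarith : (0:ℝ) ≤ f₁.eval b - f₂.eval b)]
  -- h(A) ≤ 0
  have hf1A : f₁.eval A = 0 := isRoot_maxRoot f₁ h1.ne_zero hex1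
  have hf2A : f₂.eval A ≤ 0 := by
    have hsign := sign_eval_of_pos f₂ h2 hi2.1 A (n-1) (by omega) ?_ ?_
    · rw [hd2, show n - (n-1) = 1 by omega, pow_one] at hsign; linarith
    · -- small roots of f₂ are ≤ A
      intro j hj
      have c1 : (sortedRoots f₂).getD j 0 ≤ (sortedRoots f₂).getD (n-2) 0 :=
        sorted_getD_mono (sortedRoots_sorted f₂) (by omega) (by omega)
      have c2 : (sortedRoots f₂).getD (n-2) 0 ≤ (sortedRoots g).getD (n-2) 0 :=
        (hi2.2.2.2 (n-2) (by omega)).1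
      have c3 : (sortedRoots g).getD (n-2) 0 ≤ (sortedRoots f₁).getD (n-1) 0 := by
        have h' := (hi1.2.2.2 (n-2) (by omega)).2
        rwa [show n - 2 + 1 = n - 1 by omega] at h'
      have c4 : (sortedRoots f₁).getD (n-1) 0 ≤ A :=
        le_maxRoot f₁ h1.ne_zero (sortedRoots_getD_isRoot f₁ h1.ne_zero (n-1) (by omega))
      linarith
    · -- the largest root of f₂ is ≥ A
      intro j hj1 hj2
      rw [hd2] at hj2
      have hjeq : j = n - 1 := by omega
      subst hjeq
      have hBlast : B ≤ (sortedRoots f₂).getD (f₂.natDegree - 1) 0 :=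
        isRoot_le_getD_last f₂ hi2.1
          (Polynomial.mem_roots h2.ne_zero |>.mpr (isRoot_maxRoot f₂ h2.ne_zero hex2))
      rw [hd2] at hBlast
      linarith
  have hhA : h.eval A ≤ 0 := by
    rw [eval_combo, hf1A]; nlinarith
  have hAb : A ≤ b := by simp only [hbdef]; have := le_max_left A B; linarith
  obtain ⟨x, hxm, hx⟩ := poly_ivt h hAb (by nlinarith)
  exact le_trans hxm.1 (le_maxRoot h hm.ne_zero hx)

/-- Convex combinations of two monic real-rooted polynomials with a common interlacer
are real-rooted, with largest root between the largest roots of the two polynomials. -/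
theorem convex_combination_realRooted_of_common_interlacing (n : ℕ)
    (g f₁ f₂ : Polynomial ℝ) (hg : g.Monic) (h1 : f₁.Monic) (h2 : f₂.Monic)
    (hd1 : f₁.natDegree = n) (hd2 : f₂.natDegree = n)
    (hi1 : Interlaces g f₁) (hi2 : Interlaces g f₂) :
    ∀ l : ℝ, 0 ≤ l → l ≤ 1 →
      RealRooted (l • f₁ + (1 - l) • f₂) ∧
      min (maxRoot f₁) (maxRoot f₂) ≤ maxRoot (l • f₁ + (1 - l) • f₂) ∧
      maxRoot (l • f₁ + (1 - l) • f₂) ≤ max (maxRoot f₁) (maxRoot f₂) := by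
  intro l hl0 hl1
  obtain ⟨hm, hdeg⟩ := combo_monic h1 h2 hd1 hd2 l
  have hrr : RealRooted (l • f₁ + (1 - l) • f₂) :=
    combo_realRooted n g f₁ f₂ l hg h1 h2 hd1 hd2 hi1 hi2 hl0 hl1
  set h := l • f₁ + (1 - l) • f₂ with hh
  have hn : g.natDegree + 1 = n := by rw [← hd1]; exact hi1.2.2.1
  have hexh : ∃ x, h.IsRoot x := exists_isRoot_of_realRooted h hrr (by omega)
  refine ⟨hrr, ?_, ?_⟩
  · -- lower bound
    rcases le_total (maxRoot f₁) (maxRoot f₂) with hc | hc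
    · have := maxRoot_lower_aux n g f₁ f₂ hg h1 h2 hd1 hd2 hi1 hi2 l hl0 hl1 hc
      rw [min_eq_left hc]
      exact this
    · have haux := maxRoot_lower_aux n g f₂ f₁ hg h2 h1 hd2 hd1 hi2 hi1 (1-l)
        (by linarith) (by linarith) hc
      have hcomm : (1-l) • f₂ + (1 - (1-l)) • f₁ = h := by
        rw [hh, show (1 - (1-l)) = l by ring]; ring
      rw [hcomm] at haux
      rw [min_eq_right hc]
      exact haux
  · -- upper bound
    apply maxRoot_le h hexh
    intro x hx
    by_contra hgt
    push_neg at hgt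
    have hx1 : ∀ y ∈ f₁.roots, y < x := fun y hy =>
      lt_of_le_of_lt (le_maxRoot f₁ h1.ne_zero (isRoot_of_mem_roots hy))
        (lt_of_le_of_lt (le_max_left _ _) hgt)
    have hx2 : ∀ y ∈ f₂.roots, y < x := fun y hy =>
      lt_of_le_of_lt (le_maxRoot f₂ h2.ne_zero (isRoot_of_mem_roots hy))
        (lt_of_le_of_lt (le_max_right _ _) hgt)
    have p1 := eval_pos_of_roots_lt f₁ h1 hi1.1 x hx1
    have p2 := eval_pos_of_roots_lt f₂ h2 hi2.1 x hx2
    have hev : h.eval x = 0 := hx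
    rw [eval_combo] at hev
    rcases le_total (f₁.eval x) (f₂.eval x) with hc | hc
    · nlinarith [mul_nonneg (by linarith : (0:ℝ) ≤ 1 - l) (by linarith : (0:ℝ) ≤ f₂.eval x - f₁.eval x)]
    · nlinarith [mul_nonneg hl0 (by linarith : (0:ℝ) ≤ f₁.eval x - f₂.eval x)]
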